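/- Assume √2·L < 1, let p ≥ 1 be an integer, and suppose θ_{i+p} = θ_i + p·ω for all i ∈ ℤ (the p-property). Then the unique bounded measurable ξ : ℝ → ℝ^{m+1} with ξ = Tξ is pω-periodic: ξ(t + pω) = ξ(t) for all t ∈ ℝ (assertion 1 of Theorem 1). -/

import Mathlib

/-- The Euclidean norm on `Fin n → ℝ`. -/
noncomputable def eNorm {n : ℕ} (v : Fin n → ℝ) : ℝ := Real.sqrt (∑ j, v j ^ 2)

/-- The operator `T` of the paper: coordinate `0` (the systemic arterial pressure) gets
`(Tφ)₀(t) = −∫_{−∞}^t e^{−k₀(t−s)} g₀(φ₀(s)−φ₁(s),…,φ₀(s)−φ_m(s)) ds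
  + Σ_{θ_i < t} e^{−k₀(t−θ_i)} (I₀ + J₀(φ₀(θ_i)))`,
and the compartment coordinates `j = 1,…,m` (nonzero indices of `Fin (m+1)`) get
`(Tφ)_j(t) = ∫_{−∞}^t e^{−k_j(t−s)} g_j(φ₀(s)−φ_j(s)) ds`. -/
noncomputable def Tmap (m : ℕ) (θ : ℤ → ℝ) (k : Fin (m + 1) → ℝ) (I₀ : ℝ)
    (g₀ : (Fin m → ℝ) → ℝ) (g : Fin (m + 1) → ℝ → ℝ) (J₀ : ℝ → ℝ)
    (φ : ℝ → Fin (m + 1) → ℝ) : ℝ → Fin (m + 1) → ℝ := fun t j =>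
  if j = 0 then
    -(∫ s in Set.Iic t, Real.exp (-(k 0) * (t - s)) * g₀ (fun i => φ s 0 - φ s i.succ))
      + ∑' i : ℤ, (if θ i < t then Real.exp (-(k 0) * (t - θ i)) * (I₀ + J₀ (φ (θ i) 0)) else 0)
  else
    ∫ s in Set.Iic t, Real.exp (-(k j) * (t - s)) * g j (φ s 0 - φ s j)

/-- The set `Ω`: bounded measurable functions `φ : ℝ → ℝ^{m+1}` with
`|φ₀(t)| ≤ m₀/k₀ + (I₀ + m_J)·e^{k₀ω}/(1 − e^{−k₀ω})` and `|φ_j(t)| ≤ m_j/k_j`. -/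
def OmegaSet (m : ℕ) (ω : ℝ) (k mc : Fin (m + 1) → ℝ) (I₀ mJ : ℝ) :
    Set (ℝ → Fin (m + 1) → ℝ) :=
  {φ | Measurable φ ∧ (∃ B, ∀ t, eNorm (φ t) ≤ B) ∧ ∀ t,
    |φ t 0| ≤ mc 0 / k 0 + (I₀ + mJ) * Real.exp (k 0 * ω) / (1 - Real.exp (-(k 0) * ω)) ∧
    ∀ j, j ≠ 0 → |φ t j| ≤ mc j / k j}

open MeasureTheory Set

lemma eNorm_nonneg {n : ℕ} (v : Fin n → ℝ) : 0 ≤ eNorm v := Real.sqrt_nonneg _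

lemma abs_le_eNorm {n : ℕ} (v : Fin n → ℝ) (j : Fin n) : |v j| ≤ eNorm v := by
  rw [← Real.sqrt_sq_eq_abs]
  exact Real.sqrt_le_sqrt (Finset.single_le_sum (fun i _ => sq_nonneg (v i)) (Finset.mem_univ j))

lemma expIntOn {kk : ℝ} (hkk : 0 < kk) (t : ℝ) :
    IntegrableOn (fun s => Real.exp (kk * s)) (Set.Iic t) := by
  have h0 : Integrable ((Set.Iic (kk*t)).indicator Real.exp) :=
    (integrable_indicator_iff measurableSet_Iic).2 (integrableOn_exp_Iic _)
  have h2 := h0.comp_mul_left' hkk.ne'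
  have h3 : (fun x => ((Set.Iic (kk*t)).indicator Real.exp) (kk * x))
      = (Set.Iic t).indicator (fun s => Real.exp (kk*s)) := by
    funext x
    simp only [indicator, mem_Iic, mul_le_mul_iff_right₀ hkk]
  rw [h3] at h2
  exact (integrable_indicator_iff measurableSet_Iic).1 h2

lemma expFunEq {kk : ℝ} (t : ℝ) :
    (fun s => Real.exp (-kk * (t - s))) = fun s => Real.exp (-(kk*t)) * Real.exp (kk * s) := by
  funext s; rw [← Real.exp_add]; ring_nf

lemma expIntegrableOn {kk : ℝ} (hkk : 0 < kk) (t : ℝ) :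
    IntegrableOn (fun s => Real.exp (-kk * (t - s))) (Set.Iic t) := by
  rw [expFunEq]
  exact (expIntOn hkk t).const_mul _

lemma expIntegral {kk : ℝ} (hkk : 0 < kk) (t : ℝ) :
    ∫ s in Set.Iic t, Real.exp (-kk * (t - s)) = 1 / kk := by
  rw [expFunEq, MeasureTheory.integral_const_mul]
  have h1 : ∫ s in Set.Iic t, Real.exp (kk * s) = kk⁻¹ * Real.exp (kk * t) := by
    have h3 : (fun x => ((Set.Iic (kk*t)).indicator Real.exp) (kk * x))
        = (Set.Iic t).indicator (fun s => Real.exp (kk*s)) := by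
      funext x
      simp only [indicator, mem_Iic, mul_le_mul_iff_right₀ hkk]
    rw [← integral_indicator measurableSet_Iic, ← h3,
      MeasureTheory.Measure.integral_comp_mul_left ((Set.Iic (kk*t)).indicator Real.exp) kk,
      integral_indicator measurableSet_Iic, integral_exp_Iic, smul_eq_mul,
      abs_of_pos (inv_pos.2 hkk)]
  rw [h1, ← mul_assoc, mul_comm (Real.exp _), mul_assoc, ← Real.exp_add]
  simp [mul_comm, Real.exp_neg]

lemma mulBoundedIntegrable {kk : ℝ} (hkk : 0 < kk) (t : ℝ) {f : ℝ → ℝ}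
    (hf : Measurable f) {M : ℝ} (hM : ∀ s, |f s| ≤ M) :
    IntegrableOn (fun s => Real.exp (-kk * (t - s)) * f s) (Set.Iic t) := by
  refine Integrable.mono' ((expIntegrableOn hkk t).mul_const M) ?_ ?_
  · exact ((Real.measurable_exp.comp
      (((measurable_const.sub measurable_id).const_mul (-kk)))).mul hf).aestronglyMeasurable
  · refine Filter.Eventually.of_forall fun s => ?_
    rw [Real.norm_eq_abs, abs_mul, abs_of_pos (Real.exp_pos _)]
    exact mul_le_mul_of_nonneg_left (hM s) (Real.exp_pos _).le

lemma shiftIic (f : ℝ → ℝ) (t c : ℝ) :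
    ∫ s in Set.Iic (t+c), f s = ∫ s in Set.Iic t, f (s + c) := by
  rw [← integral_indicator measurableSet_Iic, ← integral_indicator measurableSet_Iic]
  have h : (Set.Iic t).indicator (fun s => f (s+c)) = fun s => (Set.Iic (t+c)).indicator f (s + c) := by
    funext s
    simp only [indicator, mem_Iic]
    by_cases h : s ≤ t
    · rw [if_pos h, if_pos (by linarith)]
    · rw [if_neg h, if_neg (by intro h'; exact h (by linarith))]
  rw [h]
  exact (integral_add_right_eq_self _ c).symm

lemma geomBound {kk ω : ℝ} (hkk : 0 < kk) (hω : 0 < ω) (θ : ℤ → ℝ)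
    (hθ : ∀ i : ℤ, (i:ℝ)*ω ≤ θ i ∧ θ i < ((i:ℝ)+1)*ω) (t : ℝ) :
    Summable (fun i : ℤ => if θ i < t then Real.exp (-kk * (t - θ i)) else 0) ∧
    (∑' i : ℤ, if θ i < t then Real.exp (-kk * (t - θ i)) else 0)
      ≤ Real.exp (kk*ω) / (1 - Real.exp (-kk*ω)) := by
  set r := Real.exp (-kk*ω) with hr
  have hr0 : 0 < r := Real.exp_pos _
  have hr1 : r < 1 := by
    rw [hr, Real.exp_lt_one_iff]
    nlinarith
  set n : ℤ := ⌈t/ω⌉ with hn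
  set C := Real.exp (kk*ω) with hC
  set c : ℤ → ℝ := fun i => if i ≤ n - 1 then C * r ^ (n-1-i).toNat else 0 with hc
  have hinj : Function.Injective (fun j : ℕ => n - 1 - (j:ℤ)) := by
    intro a b h
    simp only at h
    omega
  have hvan : ∀ x ∉ Set.range (fun j : ℕ => n - 1 - (j:ℤ)), c x = 0 := by
    intro x hx
    rw [hc]
    simp only
    rw [if_neg]
    intro hle
    exact hx ⟨(n-1-x).toNat, by simp only; omega⟩
  have hgeo : HasSum (fun j : ℕ => C * r ^ j) (C * (1 - r)⁻¹) :=
    (hasSum_geometric_of_lt_one hr0.le hr1).mul_left C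
  have hcsum : HasSum c (C * (1-r)⁻¹) := by
    rw [← Function.Injective.hasSum_iff hinj hvan]
    have hce : ∀ j : ℕ, c (n - 1 - (j:ℤ)) = C * r ^ j := by
      intro j
      have hj : (n-1-(n-1-(j:ℤ))).toNat = j := by omega
      rw [hc]
      simp only
      rw [if_pos (show n-1-(j:ℤ) ≤ n-1 by omega), hj]
    have hfe : (c ∘ fun j : ℕ => n - 1 - (j:ℤ)) = fun j : ℕ => C * r ^ j :=
      funext hce
    rw [hfe]
    exact hgeo
  have hb0 : ∀ i : ℤ, 0 ≤ (if θ i < t then Real.exp (-kk * (t - θ i)) else 0) := by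
    intro i
    by_cases hi : θ i < t
    · rw [if_pos hi]; exact (Real.exp_pos _).le
    · rw [if_neg hi]
  have hbc : ∀ i, (if θ i < t then Real.exp (-kk*(t-θ i)) else 0) ≤ c i := by
    intro i
    by_cases hi : θ i < t
    · rw [if_pos hi, hc]
      have hiω : (i:ℝ) * ω < t := lt_of_le_of_lt (hθ i).1 hi
      have hin : i < n := by
        rw [hn, Int.lt_ceil]
        exact (lt_div_iff₀ hω).2 hiω
      simp only
      rw [if_pos (by omega)]
      have hθi : θ i < ((i:ℝ)+1)*ω := (hθ i).2
      have hNat : (((n-1-i).toNat : ℤ) : ℝ) = ((n:ℝ) - 1 - (i:ℝ)) := by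
        rw [Int.toNat_of_nonneg (by omega)]
        push_cast
        ring
      have hn1 : (n:ℝ) < t/ω + 1 := by
        rw [hn]
        exact_mod_cast Int.ceil_lt_add_one (t/ω)
      have hnω : (n:ℝ)*ω < t + ω := by
        have h2 : ((n:ℝ)-1)*ω < t := (lt_div_iff₀ hω).1 (by linarith)
        nlinarith
      have key : -kk * (t - θ i) ≤ kk*ω + (-kk*ω) * ((n:ℝ)-1-(i:ℝ)) := by
        nlinarith [mul_pos hkk hω, hkk.le]
      calc Real.exp (-kk*(t-θ i)) ≤ Real.exp (kk*ω + (-kk*ω)*((n:ℝ)-1-(i:ℝ))) :=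
            Real.exp_le_exp.2 key
        _ = C * r ^ (n-1-i).toNat := by
            rw [Real.exp_add, hC, hr]
            congr 1
            rw [← hNat]
            push_cast
            rw [mul_comm, Real.exp_nat_mul]
    · rw [if_neg hi, hc]
      simp only
      by_cases h' : i ≤ n - 1
      · rw [if_pos h']; positivity
      · rw [if_neg h']
  have hsum : Summable (fun i : ℤ => if θ i < t then Real.exp (-kk * (t - θ i)) else 0) :=
    Summable.of_nonneg_of_le hb0 hbc hcsum.summable
  refine ⟨hsum, ?_⟩
  calc (∑' i : ℤ, if θ i < t then Real.exp (-kk * (t - θ i)) else 0) ≤ ∑' i, c i :=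
        Summable.tsum_le_tsum hbc hsum hcsum.summable
    _ = C * (1-r)⁻¹ := hcsum.tsum_eq
    _ = Real.exp (kk*ω) / (1 - Real.exp (-kk*ω)) := by rw [hC, hr, div_eq_mul_inv]

lemma eNorm_eq_norm {n : ℕ} (v : Fin n → ℝ) :
    eNorm v = ‖(WithLp.equiv 2 (Fin n → ℝ)).symm v‖ := by
  rw [EuclideanSpace.norm_eq]
  simp only [eNorm, WithLp.equiv_symm_apply, WithLp.ofLp_toLp, PiLp.toLp_apply, Real.norm_eq_abs, sq_abs]

lemma eNorm_sub_le {n : ℕ} (u v : Fin n → ℝ) :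
    eNorm (fun j => u j - v j) ≤ eNorm u + eNorm v := by
  have h : (fun j => u j - v j) = u - v := rfl
  rw [h, eNorm_eq_norm, eNorm_eq_norm, eNorm_eq_norm, WithLp.equiv_symm_apply, WithLp.toLp_sub]
  exact norm_sub_le _ _

lemma vec_est_m {m : ℕ} (hm : 1 ≤ m) (a : Fin (m+1) → ℝ) :
    eNorm (fun i : Fin m => a 0 - a i.succ) ≤ Real.sqrt (2*m) * eNorm a := by
  rw [eNorm, eNorm, ← Real.sqrt_mul (by positivity)]
  apply Real.sqrt_le_sqrt
  have h1 : ∀ i : Fin m, (a 0 - a i.succ)^2 ≤ 2*(a 0)^2 + 2*(a i.succ)^2 := fun i => by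
    nlinarith [sq_nonneg (a 0 + a i.succ)]
  have hs : 0 ≤ ∑ i : Fin m, (a i.succ)^2 := Finset.sum_nonneg fun i _ => sq_nonneg _
  have hm' : (1:ℝ) ≤ m := by exact_mod_cast hm
  calc ∑ i : Fin m, (a 0 - a i.succ)^2
      ≤ ∑ i : Fin m, (2*(a 0)^2 + 2*(a i.succ)^2) := Finset.sum_le_sum (fun i _ => h1 i)
    _ = 2*m*(a 0)^2 + 2*∑ i : Fin m, (a i.succ)^2 := by
        rw [Finset.sum_add_distrib, Finset.sum_const, Finset.card_univ, Fintype.card_fin,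
          ← Finset.mul_sum]
        push_cast
        ring
    _ ≤ 2*m*((a 0)^2 + ∑ i : Fin m, (a i.succ)^2) := by nlinarith
    _ = 2*m*(∑ j : Fin (m+1), a j ^2) := by rw [Fin.sum_univ_succ]

lemma vec_est_pair {m : ℕ} (a : Fin (m+1) → ℝ) (j : Fin (m+1)) (hj : j ≠ 0) :
    |a 0 - a j| ≤ Real.sqrt 2 * eNorm a := by
  rw [← Real.sqrt_sq_eq_abs, eNorm, ← Real.sqrt_mul (by norm_num)]
  apply Real.sqrt_le_sqrt
  have h2 : (a 0)^2 + (a j)^2 ≤ ∑ jj, a jj ^2 := by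
    have h := Finset.sum_le_sum_of_subset_of_nonneg
      (Finset.subset_univ ({0, j} : Finset (Fin (m+1)))) (fun i _ _ => sq_nonneg (a i))
    rwa [Finset.sum_pair (Ne.symm hj)] at h
  nlinarith [sq_nonneg (a 0 + a j)]

lemma lipCont {f : ℝ → ℝ} {lf : ℝ} (hlf : 0 ≤ lf)
    (h : ∀ a b, |f a - f b| ≤ lf * |a - b|) : Continuous f := by
  refine (LipschitzWith.of_dist_le_mul (K := lf.toNNReal) ?_).continuous
  intro a b
  rw [Real.dist_eq, Real.dist_eq, Real.coe_toNNReal _ hlf]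
  exact h a b

lemma lipContPi {m : ℕ} {g₀ : (Fin m → ℝ) → ℝ} {l0 : ℝ} (hl0 : 0 ≤ l0)
    (h : ∀ z w, |g₀ z - g₀ w| ≤ l0 * eNorm (fun i => z i - w i)) : Continuous g₀ := by
  refine (LipschitzWith.of_dist_le_mul (K := (l0 * Real.sqrt m).toNNReal) ?_).continuous
  intro z w
  rw [Real.dist_eq, Real.coe_toNNReal _ (by positivity)]
  have hen : eNorm (fun i => z i - w i) ≤ Real.sqrt m * dist z w := by
    have hsq : ∀ i, (z i - w i)^2 ≤ (dist z w)^2 := by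
      intro i
      have h1 : |z i - w i| ≤ dist z w := by
        rw [← Real.dist_eq]
        exact dist_le_pi_dist z w i
      calc (z i - w i)^2 = |z i - w i|^2 := (sq_abs _).symm
        _ ≤ (dist z w)^2 := pow_le_pow_left₀ (abs_nonneg _) h1 2
    calc eNorm (fun i => z i - w i) = Real.sqrt (∑ i, (z i - w i)^2) := rfl
      _ ≤ Real.sqrt (m * (dist z w)^2) := by
          apply Real.sqrt_le_sqrt
          calc ∑ i, (z i - w i)^2 ≤ ∑ _i : Fin m, (dist z w)^2 :=
                Finset.sum_le_sum (fun i _ => hsq i)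
            _ = m * (dist z w)^2 := by
                rw [Finset.sum_const, Finset.card_univ, Fintype.card_fin, nsmul_eq_mul]
      _ = Real.sqrt m * dist z w := by
          rw [Real.sqrt_mul (by positivity), Real.sqrt_sq dist_nonneg]
  calc |g₀ z - g₀ w| ≤ l0 * eNorm (fun i => z i - w i) := h z w
    _ ≤ l0 * (Real.sqrt m * dist z w) := mul_le_mul_of_nonneg_left hen hl0
    _ = l0 * Real.sqrt m * dist z w := by ring


lemma abs_integral_le (μ : MeasureTheory.Measure ℝ) (f : ℝ → ℝ) :
    |∫ s, f s ∂μ| ≤ ∫ s, |f s| ∂μ := by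
  simpa [Real.norm_eq_abs] using MeasureTheory.norm_integral_le_integral_norm (μ := μ) f

lemma abs_tsum_le {f : ℤ → ℝ} (hf : Summable (fun i => |f i|)) :
    |∑' i, f i| ≤ ∑' i, |f i| := by
  have h := norm_tsum_le_tsum_norm (f := f) (by simpa [Real.norm_eq_abs] using hf)
  simpa [Real.norm_eq_abs] using h

lemma intDiffBound {kk : ℝ} (hkk : 0 < kk) (t : ℝ) {f1 f2 : ℝ → ℝ}
    (h1 : Measurable f1) (h2 : Measurable f2) {M C : ℝ}
    (hM1 : ∀ s, |f1 s| ≤ M) (hM2 : ∀ s, |f2 s| ≤ M)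
    (hdiff : ∀ s, |f1 s - f2 s| ≤ C) :
    |(∫ s in Set.Iic t, Real.exp (-kk*(t-s)) * f1 s)
      - ∫ s in Set.Iic t, Real.exp (-kk*(t-s)) * f2 s| ≤ C / kk := by
  have hIf1 := mulBoundedIntegrable hkk t h1 hM1
  have hIf2 := mulBoundedIntegrable hkk t h2 hM2
  rw [← integral_sub hIf1 hIf2]
  have step1 : |∫ s in Set.Iic t, (Real.exp (-kk*(t-s)) * f1 s - Real.exp (-kk*(t-s)) * f2 s)|
      ≤ ∫ s in Set.Iic t, C * Real.exp (-kk*(t-s)) := by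
    refine le_trans (abs_integral_le _
      (fun s => Real.exp (-kk*(t-s)) * f1 s - Real.exp (-kk*(t-s)) * f2 s)) ?_
    have hI3 : Integrable
        (fun s => |Real.exp (-kk*(t-s)) * f1 s - Real.exp (-kk*(t-s)) * f2 s|)
        (volume.restrict (Set.Iic t)) := (hIf1.sub hIf2).abs
    refine integral_mono hI3 ((expIntegrableOn hkk t).const_mul C) ?_
    intro s
    show |Real.exp (-kk*(t-s)) * f1 s - Real.exp (-kk*(t-s)) * f2 s| ≤ C * Real.exp (-kk*(t-s))
    rw [← mul_sub, abs_mul, abs_of_pos (Real.exp_pos _), mul_comm]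
    exact mul_le_mul_of_nonneg_right (hdiff s) (Real.exp_pos _).le
  rw [MeasureTheory.integral_const_mul, expIntegral hkk t, mul_one_div] at step1
  exact step1

lemma sumDiffBound {kk ω : ℝ} (hkk : 0 < kk) (hω : 0 < ω) (θ : ℤ → ℝ)
    (hθ : ∀ i : ℤ, (i:ℝ)*ω ≤ θ i ∧ θ i < ((i:ℝ)+1)*ω) (t : ℝ)
    {u1 u2 : ℤ → ℝ} {M C : ℝ} (hM1 : ∀ i, |u1 i| ≤ M) (hM2 : ∀ i, |u2 i| ≤ M)
    (hC : 0 ≤ C) (hdiff : ∀ i, |u1 i - u2 i| ≤ C) :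
    |(∑' i : ℤ, if θ i < t then Real.exp (-kk*(t-θ i)) * u1 i else 0)
      - ∑' i : ℤ, if θ i < t then Real.exp (-kk*(t-θ i)) * u2 i else 0|
      ≤ C * (Real.exp (kk*ω) / (1 - Real.exp (-kk*ω))) := by
  obtain ⟨hbsum, hble⟩ := geomBound hkk hω θ hθ t
  set b : ℤ → ℝ := fun i => if θ i < t then Real.exp (-kk * (t - θ i)) else 0 with hb
  have hM0 : 0 ≤ M := le_trans (abs_nonneg _) (hM1 0)
  have habs : ∀ (u : ℤ → ℝ), (∀ i, |u i| ≤ M) →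
      ∀ i, |if θ i < t then Real.exp (-kk*(t-θ i)) * u i else 0| ≤ M * b i := by
    intro u hu i
    rw [hb]
    by_cases hi : θ i < t
    · simp only [if_pos hi]
      rw [abs_mul, abs_of_pos (Real.exp_pos _), mul_comm]
      exact mul_le_mul_of_nonneg_right (hu i) (Real.exp_pos _).le
    · simp [if_neg hi]
  have hsum1 : Summable (fun i : ℤ => if θ i < t then Real.exp (-kk*(t-θ i)) * u1 i else 0) :=
    summable_abs_iff.1 (Summable.of_nonneg_of_le (fun i => abs_nonneg _)
      (habs u1 hM1) (hbsum.mul_left M))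
  have hsum2 : Summable (fun i : ℤ => if θ i < t then Real.exp (-kk*(t-θ i)) * u2 i else 0) :=
    summable_abs_iff.1 (Summable.of_nonneg_of_le (fun i => abs_nonneg _)
      (habs u2 hM2) (hbsum.mul_left M))
  rw [← Summable.tsum_sub hsum1 hsum2]
  have hpt : ∀ i : ℤ,
      |(if θ i < t then Real.exp (-kk*(t-θ i)) * u1 i else 0)
        - (if θ i < t then Real.exp (-kk*(t-θ i)) * u2 i else 0)| ≤ C * b i := by
    intro i
    rw [hb]
    by_cases hi : θ i < t
    · simp only [if_pos hi]
      rw [← mul_sub, abs_mul, abs_of_pos (Real.exp_pos _), mul_comm]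
      exact mul_le_mul_of_nonneg_right (hdiff i) (Real.exp_pos _).le
    · simp [if_neg hi]
  have hdsum : Summable (fun i : ℤ =>
      |(if θ i < t then Real.exp (-kk*(t-θ i)) * u1 i else 0)
        - (if θ i < t then Real.exp (-kk*(t-θ i)) * u2 i else 0)|) :=
    Summable.of_nonneg_of_le (fun i => abs_nonneg _) hpt (hbsum.mul_left C)
  calc |∑' i : ℤ, ((if θ i < t then Real.exp (-kk*(t-θ i)) * u1 i else 0)
        - (if θ i < t then Real.exp (-kk*(t-θ i)) * u2 i else 0))|
      ≤ ∑' i : ℤ, |(if θ i < t then Real.exp (-kk*(t-θ i)) * u1 i else 0)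
        - (if θ i < t then Real.exp (-kk*(t-θ i)) * u2 i else 0)| := abs_tsum_le hdsum
    _ ≤ ∑' i : ℤ, C * b i := Summable.tsum_le_tsum hpt hdsum (hbsum.mul_left C)
    _ = C * ∑' i : ℤ, b i := tsum_mul_left
    _ ≤ C * (Real.exp (kk*ω) / (1 - Real.exp (-kk*ω))) := mul_le_mul_of_nonneg_left hble hC

lemma Tshift (m : ℕ) (θ : ℤ → ℝ) (k : Fin (m + 1) → ℝ) (I₀ : ℝ)
    (g₀ : (Fin m → ℝ) → ℝ) (g : Fin (m + 1) → ℝ → ℝ) (J₀ : ℝ → ℝ)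
    (p : ℕ) (ω : ℝ) (hθp : ∀ i : ℤ, θ (i + (p : ℤ)) = θ i + (p : ℝ) * ω)
    (φ : ℝ → Fin (m + 1) → ℝ) (t : ℝ) :
    Tmap m θ k I₀ g₀ g J₀ φ (t + (p:ℝ)*ω)
      = Tmap m θ k I₀ g₀ g J₀ (fun s => φ (s + (p:ℝ)*ω)) t := by
  set c : ℝ := (p:ℝ)*ω with hc
  funext j
  simp only [Tmap]
  have he : ∀ s : ℝ, t + c - (s + c) = t - s := fun s => by ring
  by_cases hj : j = 0
  · rw [if_pos hj, if_pos hj]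
    congr 1
    · rw [shiftIic]
      simp only [he]
    · rw [(Equiv.tsum_eq (Equiv.addRight (p:ℤ))
        (fun i : ℤ => if θ i < t + c then Real.exp (-(k 0) * (t + c - θ i)) * (I₀ + J₀ (φ (θ i) 0)) else 0)).symm]
      apply tsum_congr
      intro i
      simp only [Equiv.coe_addRight]
      simp only [hθp i]
      have h1 : θ i + c < t + c ↔ θ i < t := by constructor <;> intro <;> linarith
      by_cases hi : θ i < t
      · rw [if_pos (h1.2 hi), if_pos hi]
        have h2 : t + c - (θ i + c) = t - θ i := by ring
        rw [h2]
      · rw [if_neg (fun h => hi (h1.1 h)), if_neg hi]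
  · rw [if_neg hj, if_neg hj, shiftIic]
    simp only [he]

theorem uniqFix
    (m : ℕ) (hm : 1 ≤ m) (ω : ℝ) (hω : 0 < ω) (θ : ℤ → ℝ)
    (hθ : ∀ i : ℤ, (i : ℝ) * ω ≤ θ i ∧ θ i < ((i : ℝ) + 1) * ω)
    (k : Fin (m + 1) → ℝ) (hk : ∀ j, 0 < k j) (I₀ : ℝ) (hI : 0 < I₀)
    (g₀ : (Fin m → ℝ) → ℝ) (g : Fin (m + 1) → ℝ → ℝ) (J₀ : ℝ → ℝ)
    (l : Fin (m + 1) → ℝ) (lJ : ℝ) (mc : Fin (m + 1) → ℝ) (mJ : ℝ)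
    (hl : ∀ j, 0 ≤ l j) (hlJ : 0 ≤ lJ) (hmJ : 0 ≤ mJ)
    (hg₀lip : ∀ z w : Fin m → ℝ, |g₀ z - g₀ w| ≤ l 0 * eNorm (fun i => z i - w i))
    (hglip : ∀ j, j ≠ 0 → ∀ a b : ℝ, |g j a - g j b| ≤ l j * |a - b|)
    (hJlip : ∀ a b : ℝ, |J₀ a - J₀ b| ≤ lJ * |a - b|)
    (hg₀bd : ∀ z, |g₀ z| ≤ mc 0)
    (hgbd : ∀ j, j ≠ 0 → ∀ a, |g j a| ≤ mc j)
    (hJbd : ∀ a, |J₀ a| ≤ mJ)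
    (hL : Real.sqrt 2 * Real.sqrt ((l 0 * Real.sqrt (2 * m) / k 0 + lJ * Real.exp (k 0 * ω) / (1 - Real.exp (-(k 0) * ω))) ^ 2 + ∑ i : Fin m, (l i.succ / k i.succ) ^ 2) < 1)
    (φ ψ : ℝ → Fin (m + 1) → ℝ) (Bφ Bψ : ℝ)
    (hφm : Measurable φ) (hψm : Measurable ψ)
    (hBφ : ∀ t, eNorm (φ t) ≤ Bφ) (hBψ : ∀ t, eNorm (ψ t) ≤ Bψ)
    (hφfix : ∀ t, φ t = Tmap m θ k I₀ g₀ g J₀ φ t)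
    (hψfix : ∀ t, ψ t = Tmap m θ k I₀ g₀ g J₀ ψ t) :
    ∀ t, φ t = ψ t := by
  -- continuity
  have hg₀c : Continuous g₀ := lipContPi (hl 0) hg₀lip
  have hJc : Continuous J₀ := lipCont hlJ hJlip
  have hgc : ∀ j : Fin (m+1), j ≠ 0 → Continuous (g j) := fun j hj => lipCont (hl j) (hglip j hj)
  -- distance function
  set d : ℝ → ℝ := fun t => eNorm (fun j => φ t j - ψ t j) with hd
  have hd0 : ∀ t, 0 ≤ d t := fun t => eNorm_nonneg _
  have hbdd : BddAbove (Set.range d) := by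
    refine ⟨Bφ + Bψ, ?_⟩
    rintro x ⟨t, rfl⟩
    exact le_trans (eNorm_sub_le (φ t) (ψ t)) (add_le_add (hBφ t) (hBψ t))
  set D := ⨆ t, d t with hD
  have hdD : ∀ t, d t ≤ D := fun t => le_ciSup hbdd t
  have hD0 : 0 ≤ D := le_trans (hd0 0) (hdD 0)
  -- constants
  have hE1 : 0 < 1 - Real.exp (-(k 0) * ω) := by
    have h1 : Real.exp (-(k 0)*ω) < 1 := by
      rw [Real.exp_lt_one_iff]
      nlinarith [hk 0]
    linarith
  set E := Real.exp (k 0 * ω) / (1 - Real.exp (-(k 0) * ω)) with hE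
  have hE0 : 0 ≤ E := div_nonneg (Real.exp_pos _).le hE1.le
  set c₀ := l 0 * Real.sqrt (2 * (m:ℝ)) / k 0 + lJ * E with hc₀
  have hc₀0 : 0 ≤ c₀ :=
    add_nonneg (div_nonneg (mul_nonneg (hl 0) (Real.sqrt_nonneg _)) (hk 0).le)
      (mul_nonneg hlJ hE0)
  set S := ∑ i : Fin m, (l i.succ / k i.succ)^2 with hS
  have hS0 : 0 ≤ S := Finset.sum_nonneg fun i _ => sq_nonneg _
  have hL' : Real.sqrt 2 * Real.sqrt (c₀^2 + S) < 1 := by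
    have : c₀ = l 0 * Real.sqrt (2 * (m:ℝ)) / k 0
        + lJ * Real.exp (k 0 * ω) / (1 - Real.exp (-(k 0) * ω)) := by
      rw [hc₀, hE]
      ring
    rw [this]
    exact hL
  -- main estimate
  have hcomp : ∀ (χ : ℝ → Fin (m+1) → ℝ), Measurable χ →
      Measurable (fun s => g₀ (fun i => χ s 0 - χ s i.succ)) := by
    intro χ hχ
    apply hg₀c.measurable.comp
    apply measurable_pi_lambda
    intro i
    exact ((measurable_pi_apply 0).comp hχ).sub ((measurable_pi_apply i.succ).comp hχ)
  have hest : ∀ t, d t ≤ Real.sqrt 2 * Real.sqrt (c₀^2 + S) * D := by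
    intro t
    -- coordinate 0 estimate
    have est0 : |Tmap m θ k I₀ g₀ g J₀ φ t 0 - Tmap m θ k I₀ g₀ g J₀ ψ t 0| ≤ c₀ * D := by
      have hT0 : ∀ χ : ℝ → Fin (m+1) → ℝ, Tmap m θ k I₀ g₀ g J₀ χ t 0 =
          -(∫ s in Set.Iic t, Real.exp (-(k 0) * (t - s)) * g₀ (fun i => χ s 0 - χ s i.succ))
            + ∑' i : ℤ, (if θ i < t then
                Real.exp (-(k 0) * (t - θ i)) * (I₀ + J₀ (χ (θ i) 0)) else 0) := by
        intro χ
        simp [Tmap]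
      rw [hT0 φ, hT0 ψ]
      have hpt : ∀ s : ℝ, |g₀ (fun i => φ s 0 - φ s i.succ) - g₀ (fun i => ψ s 0 - ψ s i.succ)|
          ≤ l 0 * (Real.sqrt (2*(m:ℝ)) * D) := by
        intro s
        refine le_trans (hg₀lip _ _) (mul_le_mul_of_nonneg_left ?_ (hl 0))
        have h2 : (fun i : Fin m => (φ s 0 - φ s i.succ) - (ψ s 0 - ψ s i.succ))
            = (fun i : Fin m => (fun j => φ s j - ψ s j) 0 - (fun j => φ s j - ψ s j) i.succ) := by
          funext i
          simp only
          ring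
        rw [h2]
        refine le_trans (vec_est_m hm (fun j => φ s j - ψ s j)) ?_
        exact mul_le_mul_of_nonneg_left (hdD s) (Real.sqrt_nonneg _)
      have hIdiff := intDiffBound (hk 0) t (hcomp φ hφm) (hcomp ψ hψm)
        (fun s => hg₀bd _) (fun s => hg₀bd _) hpt
      have hJpt : ∀ i : ℤ, |(I₀ + J₀ (φ (θ i) 0)) - (I₀ + J₀ (ψ (θ i) 0))| ≤ lJ * D := by
        intro i
        have h3 : (I₀ + J₀ (φ (θ i) 0)) - (I₀ + J₀ (ψ (θ i) 0))
            = J₀ (φ (θ i) 0) - J₀ (ψ (θ i) 0) := by ring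
        rw [h3]
        refine le_trans (hJlip _ _) (mul_le_mul_of_nonneg_left ?_ hlJ)
        refine le_trans ?_ (hdD (θ i))
        exact abs_le_eNorm (fun j => φ (θ i) j - ψ (θ i) j) 0
      have hJM : ∀ (χ : ℝ → Fin (m+1) → ℝ) (i : ℤ), |I₀ + J₀ (χ (θ i) 0)| ≤ I₀ + mJ := by
        intro χ i
        calc |I₀ + J₀ (χ (θ i) 0)| ≤ |I₀| + |J₀ (χ (θ i) 0)| := abs_add_le _ _
          _ ≤ I₀ + mJ := add_le_add (le_of_eq (abs_of_pos hI)) (hJbd _)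
      have hSdiff := sumDiffBound (hk 0) hω θ hθ t (hJM φ) (hJM ψ)
        (mul_nonneg hlJ hD0) hJpt
      rw [← hE] at hSdiff
      have hsplit : |(-(∫ s in Set.Iic t, Real.exp (-(k 0) * (t - s)) * g₀ (fun i => φ s 0 - φ s i.succ))
            + ∑' i : ℤ, (if θ i < t then Real.exp (-(k 0) * (t - θ i)) * (I₀ + J₀ (φ (θ i) 0)) else 0))
          - (-(∫ s in Set.Iic t, Real.exp (-(k 0) * (t - s)) * g₀ (fun i => ψ s 0 - ψ s i.succ))
            + ∑' i : ℤ, (if θ i < t then Real.exp (-(k 0) * (t - θ i)) * (I₀ + J₀ (ψ (θ i) 0)) else 0))|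
          ≤ |(∑' i : ℤ, (if θ i < t then Real.exp (-(k 0) * (t - θ i)) * (I₀ + J₀ (φ (θ i) 0)) else 0))
              - ∑' i : ℤ, (if θ i < t then Real.exp (-(k 0) * (t - θ i)) * (I₀ + J₀ (ψ (θ i) 0)) else 0)|
            + |(∫ s in Set.Iic t, Real.exp (-(k 0) * (t - s)) * g₀ (fun i => φ s 0 - φ s i.succ))
              - ∫ s in Set.Iic t, Real.exp (-(k 0) * (t - s)) * g₀ (fun i => ψ s 0 - ψ s i.succ)| := by
        rw [show (-(∫ s in Set.Iic t, Real.exp (-(k 0) * (t - s)) * g₀ (fun i => φ s 0 - φ s i.succ))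
            + ∑' i : ℤ, (if θ i < t then Real.exp (-(k 0) * (t - θ i)) * (I₀ + J₀ (φ (θ i) 0)) else 0))
          - (-(∫ s in Set.Iic t, Real.exp (-(k 0) * (t - s)) * g₀ (fun i => ψ s 0 - ψ s i.succ))
            + ∑' i : ℤ, (if θ i < t then Real.exp (-(k 0) * (t - θ i)) * (I₀ + J₀ (ψ (θ i) 0)) else 0))
          = ((∑' i : ℤ, (if θ i < t then Real.exp (-(k 0) * (t - θ i)) * (I₀ + J₀ (φ (θ i) 0)) else 0))
              - ∑' i : ℤ, (if θ i < t then Real.exp (-(k 0) * (t - θ i)) * (I₀ + J₀ (ψ (θ i) 0)) else 0))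
            - ((∫ s in Set.Iic t, Real.exp (-(k 0) * (t - s)) * g₀ (fun i => φ s 0 - φ s i.succ))
              - ∫ s in Set.Iic t, Real.exp (-(k 0) * (t - s)) * g₀ (fun i => ψ s 0 - ψ s i.succ)) from by ring]
        exact abs_sub _ _
      refine le_trans hsplit ?_
      have hring : c₀ * D = lJ * D * E + (l 0 * (Real.sqrt (2*(m:ℝ)) * D)) / k 0 := by
        rw [hc₀]
        ring
      rw [hring]
      exact add_le_add hSdiff hIdiff
    -- coordinates j ≠ 0
    have estj : ∀ j : Fin (m+1), j ≠ 0 →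
        |Tmap m θ k I₀ g₀ g J₀ φ t j - Tmap m θ k I₀ g₀ g J₀ ψ t j|
          ≤ (l j / k j) * (Real.sqrt 2 * D) := by
      intro j hj
      have hTj : ∀ χ : ℝ → Fin (m+1) → ℝ, Tmap m θ k I₀ g₀ g J₀ χ t j =
          ∫ s in Set.Iic t, Real.exp (-(k j) * (t - s)) * g j (χ s 0 - χ s j) := by
        intro χ
        simp [Tmap, hj]
      rw [hTj φ, hTj ψ]
      have hgm : ∀ (χ : ℝ → Fin (m+1) → ℝ), Measurable χ →
          Measurable (fun s => g j (χ s 0 - χ s j)) := fun χ hχ =>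
        ((hgc j hj).measurable).comp (((measurable_pi_apply 0).comp hχ).sub
          ((measurable_pi_apply j).comp hχ))
      have hpt : ∀ s : ℝ, |g j (φ s 0 - φ s j) - g j (ψ s 0 - ψ s j)|
          ≤ l j * (Real.sqrt 2 * D) := by
        intro s
        refine le_trans (hglip j hj _ _) (mul_le_mul_of_nonneg_left ?_ (hl j))
        have h4 : (φ s 0 - φ s j) - (ψ s 0 - ψ s j)
            = (fun jj => φ s jj - ψ s jj) 0 - (fun jj => φ s jj - ψ s jj) j := by
          simp only
          ring
        rw [h4]
        refine le_trans (vec_est_pair (fun jj => φ s jj - ψ s jj) j hj) ?_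
        exact mul_le_mul_of_nonneg_left (hdD s) (Real.sqrt_nonneg _)
      have hIdiff := intDiffBound (hk j) t (hgm φ hφm) (hgm ψ hψm)
        (fun s => hgbd j hj _) (fun s => hgbd j hj _) hpt
      refine le_trans hIdiff (le_of_eq ?_)
      ring
    -- assemble
    have hdt : d t = eNorm (fun j => Tmap m θ k I₀ g₀ g J₀ φ t j
        - Tmap m θ k I₀ g₀ g J₀ ψ t j) := by
      rw [hd]
      simp only
      rw [hφfix t, hψfix t]
    rw [hdt]
    have hsum : ∑ j : Fin (m+1), (Tmap m θ k I₀ g₀ g J₀ φ t j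
        - Tmap m θ k I₀ g₀ g J₀ ψ t j)^2 ≤ 2*(c₀^2+S)*D^2 := by
      rw [Fin.sum_univ_succ]
      have h0 : (Tmap m θ k I₀ g₀ g J₀ φ t 0 - Tmap m θ k I₀ g₀ g J₀ ψ t 0)^2 ≤ (c₀*D)^2 := by
        rw [← sq_abs]
        exact pow_le_pow_left₀ (abs_nonneg _) est0 2
      have hjj : ∀ i : Fin m, (Tmap m θ k I₀ g₀ g J₀ φ t i.succ
          - Tmap m θ k I₀ g₀ g J₀ ψ t i.succ)^2 ≤ (l i.succ / k i.succ)^2 * (2*D^2) := by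
        intro i
        have h5 := estj i.succ (Fin.succ_ne_zero i)
        calc (Tmap m θ k I₀ g₀ g J₀ φ t i.succ - Tmap m θ k I₀ g₀ g J₀ ψ t i.succ)^2
            = |Tmap m θ k I₀ g₀ g J₀ φ t i.succ - Tmap m θ k I₀ g₀ g J₀ ψ t i.succ|^2 :=
              (sq_abs _).symm
          _ ≤ ((l i.succ / k i.succ) * (Real.sqrt 2 * D))^2 := pow_le_pow_left₀ (abs_nonneg _) h5 2
          _ = (l i.succ / k i.succ)^2 * (2*D^2) := by
              rw [mul_pow, mul_pow, Real.sq_sqrt (by norm_num : (0:ℝ) ≤ 2)]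
      calc (Tmap m θ k I₀ g₀ g J₀ φ t 0 - Tmap m θ k I₀ g₀ g J₀ ψ t 0)^2
            + ∑ i : Fin m, (Tmap m θ k I₀ g₀ g J₀ φ t i.succ - Tmap m θ k I₀ g₀ g J₀ ψ t i.succ)^2
          ≤ (c₀*D)^2 + ∑ i : Fin m, (l i.succ / k i.succ)^2 * (2*D^2) :=
            add_le_add h0 (Finset.sum_le_sum fun i _ => hjj i)
        _ = c₀^2*D^2 + S*(2*D^2) := by
            rw [mul_pow, ← Finset.sum_mul, ← hS]
        _ ≤ 2*(c₀^2+S)*D^2 := by nlinarith [sq_nonneg D, sq_nonneg c₀]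
    calc eNorm (fun j => Tmap m θ k I₀ g₀ g J₀ φ t j - Tmap m θ k I₀ g₀ g J₀ ψ t j)
        ≤ Real.sqrt (2*(c₀^2+S)*D^2) := Real.sqrt_le_sqrt hsum
      _ = Real.sqrt 2 * Real.sqrt (c₀^2 + S) * D := by
          rw [Real.sqrt_mul (by positivity), Real.sqrt_mul (by norm_num), Real.sqrt_sq hD0]
  have hDle : D ≤ Real.sqrt 2 * Real.sqrt (c₀^2 + S) * D := ciSup_le hest
  have hq0 : 0 ≤ Real.sqrt 2 * Real.sqrt (c₀^2 + S) :=
    mul_nonneg (Real.sqrt_nonneg _) (Real.sqrt_nonneg _)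
  have hDz : D ≤ 0 := by nlinarith
  intro t
  have hdt : d t = 0 := le_antisymm (le_trans (hdD t) hDz) (hd0 t)
  funext j
  have h1 : |φ t j - ψ t j| ≤ d t := abs_le_eNorm (fun j => φ t j - ψ t j) j
  rw [hdt] at h1
  have h2 : φ t j - ψ t j = 0 := abs_eq_zero.1 (le_antisymm h1 (abs_nonneg _))
  linarith

/-- Assume `√2·L < 1`, let `p ≥ 1`, and suppose `θ_{i+p} = θ_i + p·ω` for all
`i ∈ ℤ`. Then the unique bounded measurable `ξ` with `ξ = Tξ` is `pω`-periodic
(assertion 1 of Theorem 1). -/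
theorem stmt6
    (m : ℕ) (hm : 1 ≤ m) (ω : ℝ) (hω : 0 < ω) (θ : ℤ → ℝ)
    (hθ : ∀ i : ℤ, (i : ℝ) * ω ≤ θ i ∧ θ i < ((i : ℝ) + 1) * ω)
    (k : Fin (m + 1) → ℝ) (hk : ∀ j, 0 < k j) (I₀ : ℝ) (hI : 0 < I₀)
    (g₀ : (Fin m → ℝ) → ℝ) (g : Fin (m + 1) → ℝ → ℝ) (J₀ : ℝ → ℝ)
    (l : Fin (m + 1) → ℝ) (lJ : ℝ) (mc : Fin (m + 1) → ℝ) (mJ : ℝ)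
    (hl : ∀ j, 0 ≤ l j) (hlJ : 0 ≤ lJ) (hmc : ∀ j, 0 ≤ mc j) (hmJ : 0 ≤ mJ)
    (hg₀lip : ∀ z w : Fin m → ℝ, |g₀ z - g₀ w| ≤ l 0 * eNorm (fun i => z i - w i))
    (hglip : ∀ j, j ≠ 0 → ∀ a b : ℝ, |g j a - g j b| ≤ l j * |a - b|)
    (hJlip : ∀ a b : ℝ, |J₀ a - J₀ b| ≤ lJ * |a - b|)
    (hg₀bd : ∀ z, |g₀ z| ≤ mc 0)
    (hgbd : ∀ j, j ≠ 0 → ∀ a, |g j a| ≤ mc j)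
    (hJbd : ∀ a, |J₀ a| ≤ mJ)
    (hL : Real.sqrt 2 * Real.sqrt ((l 0 * Real.sqrt (2 * m) / k 0 + lJ * Real.exp (k 0 * ω) / (1 - Real.exp (-(k 0) * ω))) ^ 2 + ∑ i : Fin m, (l i.succ / k i.succ) ^ 2) < 1)
    (p : ℕ) (hp : 1 ≤ p) (hθp : ∀ i : ℤ, θ (i + (p : ℤ)) = θ i + (p : ℝ) * ω) :
    ∀ ξ : ℝ → Fin (m + 1) → ℝ,
      (Measurable ξ ∧ (∃ B, ∀ t, eNorm (ξ t) ≤ B) ∧ ∀ t, ξ t = Tmap m θ k I₀ g₀ g J₀ ξ t) →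
      ∀ t : ℝ, ξ (t + (p : ℝ) * ω) = ξ t := by
  intro ξ hξ
  obtain ⟨hξm, ⟨B, hB⟩, hfix⟩ := hξ
  intro t
  have hηm : Measurable (fun s => ξ (s + (p:ℝ)*ω)) := hξm.comp (measurable_add_const _)
  have hηfix : ∀ u, (fun s => ξ (s + (p:ℝ)*ω)) u
      = Tmap m θ k I₀ g₀ g J₀ (fun s => ξ (s + (p:ℝ)*ω)) u := by
    intro u
    simp only
    rw [hfix (u + (p:ℝ)*ω), Tshift m θ k I₀ g₀ g J₀ p ω hθp ξ u]
  have h := uniqFix m hm ω hω θ hθ k hk I₀ hI g₀ g J₀ l lJ mc mJ hl hlJ hmJ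
    hg₀lip hglip hJlip hg₀bd hgbd hJbd hL (fun s => ξ (s + (p:ℝ)*ω)) ξ B B
    hηm hξm (fun u => hB _) hB hηfix hfix t
  exact h
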